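/- Let V₁, V₂, V₃, V₄ ∈ ℝ² with Vᵢ = (βᵢ, γᵢ), and suppose (s,t) ∈ (0,1) × (0,1) satisfies G(s,t) = (0,0). Then t satisfies the quadratic equation (A + Γ − B)·t² + (B − 2Γ)·t + Γ = 0. If moreover A + Γ − B ≠ 0, then Δ ≥ 0 and t = (2Γ − B + √Δ)/(2(A + Γ − B)) or t = (2Γ − B − √Δ)/(2(A + Γ − B)); and if in addition (β₂−β₁)·t + (β₃−β₄)·(1−t) ≠ 0, then s = (β₂·t + β₃·(1−t)) / ((β₂−β₁)·t + (β₃−β₄)·(1−t)). -/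

import Mathlib

/-- Determinant of two vectors in ℝ². -/
noncomputable def det2 (U W : ℝ × ℝ) : ℝ := U.1 * W.2 - U.2 * W.1

/-- The canopy bilinear map G(s,t) = st·V₁ + (1-s)t·V₂ + (1-s)(1-t)·V₃ + s(1-t)·V₄. -/
noncomputable def Gmap (V₁ V₂ V₃ V₄ : ℝ × ℝ) (s t : ℝ) : ℝ × ℝ :=
  (s * t) • V₁ + ((1 - s) * t) • V₂ + ((1 - s) * (1 - t)) • V₃ + (s * (1 - t)) • V₄

/-- A zero (s,t) ∈ (0,1)² of the canopy map has t satisfying the quadratic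
(A+Γ-B)t² + (B-2Γ)t + Γ = 0; if A+Γ-B ≠ 0 then Δ ≥ 0 and t is given by the quadratic
formula, and s is determined by t whenever its denominator is nonzero. -/
theorem stmt4 (V₁ V₂ V₃ V₄ : ℝ × ℝ) (β₁ β₂ β₃ β₄ γ₁ γ₂ γ₃ γ₄ : ℝ)
    (h1 : V₁ = (β₁, γ₁)) (h2 : V₂ = (β₂, γ₂)) (h3 : V₃ = (β₃, γ₃)) (h4 : V₄ = (β₄, γ₄))
    (A B Γ Δ : ℝ)
    (hA : A = det2 V₁ V₂) (hB : B = det2 V₄ V₂ + det2 V₁ V₃) (hΓ : Γ = det2 V₄ V₃)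
    (hΔ : Δ = B ^ 2 - 4 * A * Γ)
    (s t : ℝ) (hs : s ∈ Set.Ioo (0 : ℝ) 1) (ht : t ∈ Set.Ioo (0 : ℝ) 1)
    (hG : Gmap V₁ V₂ V₃ V₄ s t = 0) :
    (A + Γ - B) * t ^ 2 + (B - 2 * Γ) * t + Γ = 0 ∧
    (A + Γ - B ≠ 0 →
      0 ≤ Δ ∧
      (t = (2 * Γ - B + Real.sqrt Δ) / (2 * (A + Γ - B)) ∨
        t = (2 * Γ - B - Real.sqrt Δ) / (2 * (A + Γ - B))) ∧
      ((β₂ - β₁) * t + (β₃ - β₄) * (1 - t) ≠ 0 →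
        s = (β₂ * t + β₃ * (1 - t)) / ((β₂ - β₁) * t + (β₃ - β₄) * (1 - t)))) := by
  subst h1 h2 h3 h4 hΔ
  simp only [Gmap, det2, Prod.ext_iff, Prod.smul_mk, Prod.mk_add_mk, smul_eq_mul,
    Prod.fst_add, Prod.snd_add, Prod.fst_zero, Prod.snd_zero] at hG
  simp only [det2] at hA hB hΓ
  obtain ⟨eβ, eγ⟩ := hG
  have hquad : (A + Γ - B) * t ^ 2 + (B - 2 * Γ) * t + Γ = 0 := by
    rw [hA, hB, hΓ]
    linear_combination ((γ₂ - γ₁) * t + (γ₃ - γ₄) * (1 - t)) * eβ -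
      ((β₂ - β₁) * t + (β₃ - β₄) * (1 - t)) * eγ
  have hquad' : (A + Γ - B) * (t * t) + (B - 2 * Γ) * t + Γ = 0 := by
    linear_combination hquad
  refine ⟨hquad, fun ha => ?_⟩
  have hdisc : discrim (A + Γ - B) (B - 2 * Γ) Γ = (2 * (A + Γ - B) * t + (B - 2 * Γ)) ^ 2 :=
    (quadratic_eq_zero_iff_discrim_eq_sq ha t).mp hquad'
  have hde : discrim (A + Γ - B) (B - 2 * Γ) Γ = B ^ 2 - 4 * A * Γ := by
    rw [discrim]; ring
  have hΔnn : 0 ≤ B ^ 2 - 4 * A * Γ := by rw [← hde, hdisc]; positivity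
  refine ⟨hΔnn, ?_, ?_⟩
  · have hsq : discrim (A + Γ - B) (B - 2 * Γ) Γ =
        Real.sqrt (B ^ 2 - 4 * A * Γ) * Real.sqrt (B ^ 2 - 4 * A * Γ) := by
      rw [hde, Real.mul_self_sqrt hΔnn]
    rcases (quadratic_eq_zero_iff ha hsq t).mp hquad' with h | h
    · left; rw [h]; ring_nf
    · right; rw [h]; ring_nf
  · intro hd
    rw [eq_div_iff hd]
    linear_combination -eβ
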